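/- If a real matrix A is totally unimodular, then for every field F, the matrix obtained by interpreting the entries of A (all of which lie in {0,1,-1}) as elements of F represents a matroid on the column index set that is independent of the choice of F; in particular, a set of columns of A is linearly independent over the rationals if and only if the corresponding set of columns is linearly independent over F. -/

import Mathlib

open scoped Classical
open Matrix

lemma aux_li_iff {K : Type*} [Field K] {m ι : Type*} [Fintype m] [Fintype ι] [DecidableEq ι]
    (M : Matrix m ι K) :
    LinearIndependent K (fun j : ι => fun i : m => M i j) ↔
      ∃ f : ι → m, Function.Injective f ∧ (M.submatrix f id).det ≠ 0 := by
  constructor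
  · intro h
    have hM : LinearIndependent K (fun j : ι => Mᵀ j) := h
    have hrank : Mᵀ.rank = Fintype.card ι := hM.rank_matrix
    have hrank' : M.rank = Fintype.card ι := by rw [← Matrix.rank_transpose M]; exact hrank
    have hspan : Submodule.span K (Set.range M) = ⊤ := by
      apply Submodule.eq_top_of_finrank_eq
      have h1 : Module.finrank K (Submodule.span K (Set.range M)) = Fintype.card ι := by
        rw [M.rank_eq_finrank_span_row] at hrank'; exact hrank'
      rw [h1, Module.finrank_pi]
    obtain ⟨t, hts, htspan, hli⟩ := exists_linearIndependent K (Set.range M)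
    rw [hspan] at htspan
    have hb : Module.Basis t K (ι → K) := Module.Basis.mk hli (by rw [Subtype.range_coe, htspan])
    haveI : Fintype t := FiniteDimensional.fintypeBasisIndex hb
    have hcard : Fintype.card t = Fintype.card ι := by
      have := Module.finrank_eq_card_basis hb
      rw [Module.finrank_pi] at this; exact this.symm
    obtain ⟨e⟩ : Nonempty (ι ≃ t) := ⟨(Fintype.equivOfCardEq hcard).symm⟩
    have hchoice : ∀ x : t, ∃ i : m, M i = (x : ι → K) := fun x => hts x.2
    choose g hg using hchoice
    refine ⟨g ∘ e, ?_, ?_⟩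
    · intro a b hab
      have : M (g (e a)) = M (g (e b)) := by simp [Function.comp] at hab; rw [hab]
      rw [hg, hg] at this
      exact e.injective (Subtype.coe_injective this)
    · have hrows : LinearIndependent K (fun j : ι => (M.submatrix (g ∘ e) id) j) := by
        have : (fun j : ι => (M.submatrix (g ∘ e) id) j) = fun j : ι => ((e j : ι → K)) := by
          funext j
          ext i
          have := hg (e j)
          simp [Matrix.submatrix, this]
        rw [this]
        exact hli.comp e e.injective
      intro hdet
      have : IsUnit (M.submatrix (g ∘ e) id) := Matrix.linearIndependent_rows_iff_isUnit.mp hrows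
      rw [Matrix.isUnit_iff_isUnit_det, hdet] at this
      exact not_isUnit_zero this
  · rintro ⟨f, hf, hdet⟩
    have hunit : IsUnit (M.submatrix f id) := (Matrix.isUnit_iff_isUnit_det _).mpr hdet.isUnit
    have hcols : LinearIndependent K (fun j : ι => (M.submatrix f id)ᵀ j) :=
      Matrix.linearIndependent_cols_iff_isUnit.mpr hunit
    rw [Fintype.linearIndependent_iff] at hcols ⊢
    intro c hc j
    apply hcols c
    funext i
    have := congrFun hc (f i)
    simpa using this


/-- A real matrix is totally unimodular if every square submatrix
(chosen via injective row and column selections) has determinant `0`, `1`, or `-1`. -/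
def IsTotUnimodular {m n : Type*} (A : Matrix m n ℝ) : Prop :=
  ∀ (k : ℕ) (f : Fin k → m) (g : Fin k → n), Function.Injective f → Function.Injective g →
    (A.submatrix f g).det = 0 ∨ (A.submatrix f g).det = 1 ∨ (A.submatrix f g).det = -1

/-- Reinterpret a real number lying in `{0, 1, -1}` as an element of another ring,
mapping `0 ↦ 0`, `1 ↦ 1`, `-1 ↦ -1`. -/
noncomputable def reinterpret (R : Type*) [Ring R] (x : ℝ) : R :=
  if x = 1 then 1 else if x = -1 then -1 else 0

lemma key_lemma {m n : Type*} [Fintype m] [Fintype n] (A : Matrix m n ℝ)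
    (hA : ∀ (k : ℕ) (f : Fin k → m) (g : Fin k → n), Function.Injective f → Function.Injective g →
      (A.submatrix f g).det = 0 ∨ (A.submatrix f g).det = 1 ∨ (A.submatrix f g).det = -1)
    (K : Type*) [Field K] (s : Set n) [Fintype s] :
    LinearIndependent K (fun j : s => fun i : m => reinterpret K (A i j)) ↔
      ∃ f : s → m, Function.Injective f ∧
        (Matrix.submatrix (fun i j => reinterpret ℤ (A i j)) f Subtype.val).det ≠ 0 := by
  classical
  have h01 : ∀ i j, A i j = 0 ∨ A i j = 1 ∨ A i j = -1 := by
    intro i j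
    have := hA 1 (fun _ => i) (fun _ => j)
      (Function.injective_of_subsingleton _) (Function.injective_of_subsingleton _)
    simpa [Matrix.det_fin_one] using this
  set B : Matrix m n ℤ := fun i j => reinterpret ℤ (A i j) with hB
  have hBA : ∀ i j, ((B i j : ℤ) : ℝ) = A i j := by
    intro i j
    rcases h01 i j with h | h | h <;> simp [hB, reinterpret, h] <;> norm_num
  have tuB : ∀ f : s → m, Function.Injective f →
      (B.submatrix f Subtype.val).det = 0 ∨ (B.submatrix f Subtype.val).det = 1 ∨
        (B.submatrix f Subtype.val).det = -1 := by
    intro f hf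
    have e : Fin (Fintype.card s) ≃ s := (Fintype.equivFin s).symm
    have h1 : (B.submatrix (f ∘ e) (Subtype.val ∘ e)).det = (B.submatrix f Subtype.val).det := by
      have := Matrix.det_submatrix_equiv_self e (B.submatrix f Subtype.val)
      rw [← this]; rfl
    have h2 := hA _ (f ∘ e) (Subtype.val ∘ e) (hf.comp e.injective)
      (Subtype.val_injective.comp e.injective)
    have h3 : A.submatrix (f ∘ e) (Subtype.val ∘ e) =
        (B.submatrix (f ∘ e) (Subtype.val ∘ e)).map (Int.cast : ℤ → ℝ) := by
      funext i j; simp [hBA]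
    rw [h3] at h2
    have h4 := (Int.castRingHom ℝ).map_det (B.submatrix (f ∘ e) (Subtype.val ∘ e))
    simp only [RingHom.mapMatrix_apply, Int.coe_castRingHom] at h4
    rw [← h4] at h2
    rw [← h1]
    rcases h2 with h | h | h
    · exact Or.inl (by exact_mod_cast h)
    · exact Or.inr (Or.inl (by exact_mod_cast h))
    · exact Or.inr (Or.inr (by exact_mod_cast h))
  have hmat : (fun j : s => fun i : m => reinterpret K (A i j)) =
      (fun j : s => fun i : m => ((B.submatrix id Subtype.val).map (Int.cast : ℤ → K)) i j) := by
    funext j i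
    simp only [Matrix.map_apply, Matrix.submatrix_apply, id_eq, hB]
    rcases h01 i (j : n) with h | h | h <;> simp [reinterpret, h, Matrix.submatrix] <;> norm_num
  rw [hmat, aux_li_iff]
  apply exists_congr; intro f
  apply and_congr_right; intro hf
  have hsub : ((B.submatrix id (Subtype.val : s → n)).map (Int.cast : ℤ → K)).submatrix f id =
      (B.submatrix f (Subtype.val : s → n)).map (Int.cast : ℤ → K) := by
    funext i j; simp
  have h4 : ((B.submatrix f (Subtype.val : s → n)).map (Int.cast : ℤ → K)).det =
      (((B.submatrix f (Subtype.val : s → n)).det : ℤ) : K) :=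
    ((Int.castRingHom K).map_det _).symm
  rw [hsub, h4]
  rcases tuB f hf with h | h | h <;> simp [h]


/-- If a real matrix `A` is totally unimodular, then for every field `F`, the matrix
obtained by interpreting the entries of `A` (all in `{0,1,-1}`) as elements of `F` represents a
matroid on the column index set independent of `F`: a set of columns of `A` is linearly
independent over the rationals iff the corresponding set of columns is linearly independent
over `F`. -/
theorem stmt2 {m n : Type*} [Fintype m] [Fintype n] (A : Matrix m n ℝ)
    (hA : IsTotUnimodular A)
    (F : Type*) [Field F] (s : Set n) :
    LinearIndependent ℚ (fun j : s => fun i : m => reinterpret ℚ (A i j)) ↔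
      LinearIndependent F (fun j : s => fun i : m => reinterpret F (A i j)) := by
  haveI : Fintype s := (Set.toFinite s).fintype
  exact (key_lemma A hA ℚ s).trans (key_lemma A hA F s).symm
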